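/- The tetrahedral group T(5,5;2,2;2,3), presented as ⟨f1, f2, f3, f4 | f1^2 = f2^2 = f3^2 = f4^3 = 1, f1 f2 f3 f4 = 1, (f1 f2)^5 = 1, (f2 f4)^5 = 1⟩, admits a surjective homomorphism onto PSL(2,19). -/

import Mathlib

set_option maxRecDepth 8000


open FreeGroup Matrix

/-- The relators of the tetrahedral group `T(n,m;2,2;c,3)`. -/
def tetRels (n m c : ℕ) : Set (FreeGroup (Fin 4)) :=
  {of 0 ^ c, of 1 ^ 2, of 2 ^ 2, of 3 ^ 3,
   of 0 * of 1 * of 2 * of 3, (of 0 * of 1) ^ n, (of 1 * of 3) ^ m}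

/-- The projective special linear group `PSL(2,q)`. -/
abbrev PSL2 (q : ℕ) :=
  SpecialLinearGroup (Fin 2) (ZMod q) ⧸
    Subgroup.center (SpecialLinearGroup (Fin 2) (ZMod q))

namespace TetAux

instance : Fact (Nat.Prime 19) := ⟨by norm_num⟩

abbrev SL19 := SpecialLinearGroup (Fin 2) (ZMod 19)

instance : DecidableEq SL19 := fun A B =>
  decidable_of_iff (A.1 = B.1) Subtype.ext_iff.symm

/-- the negated identity -/
def N : SL19 := ⟨!![18, 0; 0, 18], by decide⟩

/-- the four generator images in SL(2,19) -/
def A : Fin 4 → SL19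
  | 0 => ⟨!![3, 17; 5, 16], by decide⟩
  | 1 => ⟨!![11, 3; 10, 8], by decide⟩
  | 2 => ⟨!![2, 13; 4, 17], by decide⟩
  | 3 => ⟨!![1, 7; 5, 17], by decide⟩

/-- the projection onto PSL(2,19) -/
def pr : SL19 →* PSL2 19 := QuotientGroup.mk' _

lemma pr_eq_one_of {X : SL19} (h : X = 1 ∨ X = N) : pr X = 1 := by
  rw [pr, QuotientGroup.mk'_apply, QuotientGroup.eq_one_iff]
  rcases h with rfl | rfl
  · exact Subgroup.one_mem _
  · exact Matrix.SpecialLinearGroup.mem_center_iff.mpr ⟨-1, by decide, by decide⟩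

lemma pr_N_mul (X : SL19) : pr (N * X) = pr X := by
  rw [_root_.map_mul, pr_eq_one_of (Or.inr rfl), one_mul]

/-- upper triangular transvections -/
def U (t : ZMod 19) : SL19 := ⟨!![1, t; 0, 1], by simp [Matrix.det_fin_two_of]⟩

/-- lower triangular transvections -/
def L (t : ZMod 19) : SL19 := ⟨!![1, 0; t, 1], by simp [Matrix.det_fin_two_of]⟩

lemma U_mul (s t : ZMod 19) : U s * U t = U (s + t) := by
  apply Subtype.ext
  rw [Matrix.SpecialLinearGroup.coe_mul]
  simp [U, Matrix.SpecialLinearGroup.coe_mul, Matrix.mul_fin_two, add_comm]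

lemma L_mul (s t : ZMod 19) : L s * L t = L (s + t) := by
  apply Subtype.ext
  rw [Matrix.SpecialLinearGroup.coe_mul]
  simp [L, Matrix.SpecialLinearGroup.coe_mul, Matrix.mul_fin_two, add_comm]

lemma U_pow (n : ℕ) : U 1 ^ n = U n := by
  induction n with
  | zero => apply Subtype.ext; rw [pow_zero]; simp [U, Matrix.one_fin_two]
  | succ k ih => rw [pow_succ, ih, U_mul]; push_cast; ring_nf

lemma L_pow (n : ℕ) : L 1 ^ n = L n := by
  induction n with
  | zero => apply Subtype.ext; rw [pow_zero]; simp [L, Matrix.one_fin_two]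
  | succ k ih => rw [pow_succ, ih, L_mul]; push_cast; ring_nf

section gen

variable {H : Subgroup (PSL2 19)} (hu : pr (U 1) ∈ H) (hl : pr (L 1) ∈ H)

include hu in
lemma U_mem (t : ZMod 19) : pr (U t) ∈ H := by
  have : U t = U 1 ^ t.val := by
    rw [U_pow, ZMod.natCast_val, ZMod.cast_id]
  rw [this, _root_.map_pow]
  exact pow_mem hu _

include hl in
lemma L_mem (t : ZMod 19) : pr (L t) ∈ H := by
  have : L t = L 1 ^ t.val := by
    rw [L_pow, ZMod.natCast_val, ZMod.cast_id]
  rw [this, _root_.map_pow]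
  exact pow_mem hl _

include hu hl in
lemma mem_of_ne_zero (g : SL19) (hc : g.1 1 0 ≠ 0) : pr g ∈ H := by
  set a := g.1 0 0 with ha
  set b := g.1 0 1 with hb
  set c := g.1 1 0 with hc'
  set d := g.1 1 1 with hd
  have hdet : a * d - b * c = 1 := by
    have := g.2
    rw [Matrix.det_fin_two] at this
    exact this
  have key : g = U ((a - 1) / c) * L c * U ((d - 1) / c) := by
    apply Subtype.ext
    have hg : g.1 = !![a, b; c, d] := Matrix.eta_fin_two g.1
    rw [hg]
    rw [Matrix.SpecialLinearGroup.coe_mul, Matrix.SpecialLinearGroup.coe_mul]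
    simp only [Matrix.SpecialLinearGroup.coe_mul, U, L, Matrix.mul_fin_two]
    ext i j
    fin_cases i <;> fin_cases j <;>
      simp only [Matrix.cons_val', Matrix.cons_val_zero, Matrix.cons_val_one, Matrix.head_cons,
        Matrix.empty_val', Matrix.cons_val_fin_one, Matrix.head_fin_const, Matrix.of_apply,
        Fin.zero_eta, Fin.mk_one] <;>
      field_simp <;> grind
  rw [key, _root_.map_mul, _root_.map_mul]
  exact mul_mem (mul_mem (U_mem hu _) (L_mem hl _)) (U_mem hu _)

include hu hl in
lemma mem_all (g : SL19) : pr g ∈ H := by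
  by_cases hc : g.1 1 0 ≠ 0
  · exact mem_of_ne_zero hu hl g hc
  · push_neg at hc
    have hdet : g.1 0 0 * g.1 1 1 - g.1 0 1 * g.1 1 0 = 1 := by
      have := g.2
      rw [Matrix.det_fin_two] at this
      exact this
    have ha : g.1 0 0 ≠ 0 := by
      intro h0
      rw [h0, hc] at hdet
      simp at hdet
    have h10 : (L 1 * g).1 1 0 ≠ 0 := by
      have : (L 1 * g).1 = !![1, 0; 1, 1] * g.1 := rfl
      rw [this]
      simpa [Matrix.mul_apply, Fin.sum_univ_succ, hc] using ha
    have := mem_of_ne_zero hu hl (L 1 * g) h10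
    rw [_root_.map_mul] at this
    have h2 : pr g = (pr (L 1))⁻¹ * (pr (L 1) * pr g) := by group
    rw [h2]
    exact mul_mem (inv_mem (L_mem hl 1)) this

end gen

/-- the generator map -/
def fgen : Fin 4 → PSL2 19 := fun i => pr (A i)

lemma rels_hold : ∀ r ∈ tetRels 5 5 2, FreeGroup.lift fgen r = 1 := by
  intro r hr
  simp only [tetRels, Set.mem_insert_iff, Set.mem_singleton_iff] at hr
  rcases hr with rfl | rfl | rfl | rfl | rfl | rfl | rfl
  · rw [_root_.map_pow, FreeGroup.lift_apply_of]
    show pr (A 0) ^ 2 = 1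
    rw [← _root_.map_pow]
    exact pr_eq_one_of (by decide)
  · rw [_root_.map_pow, FreeGroup.lift_apply_of]
    show pr (A 1) ^ 2 = 1
    rw [← _root_.map_pow]
    exact pr_eq_one_of (by decide)
  · rw [_root_.map_pow, FreeGroup.lift_apply_of]
    show pr (A 2) ^ 2 = 1
    rw [← _root_.map_pow]
    exact pr_eq_one_of (by decide)
  · rw [_root_.map_pow, FreeGroup.lift_apply_of]
    show pr (A 3) ^ 3 = 1
    rw [← _root_.map_pow]
    exact pr_eq_one_of (by decide)
  · rw [_root_.map_mul, _root_.map_mul, _root_.map_mul, FreeGroup.lift_apply_of, FreeGroup.lift_apply_of,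
      FreeGroup.lift_apply_of, FreeGroup.lift_apply_of]
    show pr (A 0) * pr (A 1) * pr (A 2) * pr (A 3) = 1
    rw [← _root_.map_mul, ← _root_.map_mul, ← _root_.map_mul]
    exact pr_eq_one_of (by decide)
  · rw [_root_.map_pow, _root_.map_mul, FreeGroup.lift_apply_of, FreeGroup.lift_apply_of]
    show (pr (A 0) * pr (A 1)) ^ 5 = 1
    rw [← _root_.map_mul, ← _root_.map_pow]
    exact pr_eq_one_of (by decide)
  · rw [_root_.map_pow, _root_.map_mul, FreeGroup.lift_apply_of, FreeGroup.lift_apply_of]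
    show (pr (A 1) * pr (A 3)) ^ 5 = 1
    rw [← _root_.map_mul, ← _root_.map_pow]
    exact pr_eq_one_of (by decide)

/-- the homomorphism -/
def phi : PresentedGroup (tetRels 5 5 2) →* PSL2 19 := PresentedGroup.toGroup rels_hold

lemma phi_surjective : Function.Surjective phi := by
  rw [← MonoidHom.range_eq_top, Subgroup.eq_top_iff']
  intro x
  obtain ⟨g, rfl⟩ : ∃ g : SL19, pr g = x := QuotientGroup.mk'_surjective _ x
  have hA : ∀ i, pr (A i) ∈ phi.range := fun i =>
    ⟨PresentedGroup.of i, PresentedGroup.toGroup.of rels_hold⟩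
  have hu : pr (U 1) ∈ phi.range := by
    have hW : A 2 * A 0 * A 2 * A 0 * A 3 * A 1 * A 0 = N * U 1 := by decide
    have : pr (A 2 * A 0 * A 2 * A 0 * A 3 * A 1 * A 0) = pr (U 1) := by
      rw [hW, pr_N_mul]
    rw [← this]
    simp only [_root_.map_mul]
    exact mul_mem (mul_mem (mul_mem (mul_mem (mul_mem (mul_mem (hA 2) (hA 0)) (hA 2)) (hA 0))
      (hA 3)) (hA 1)) (hA 0)
  have hl : pr (L 1) ∈ phi.range := by
    have hW : A 1 * A 0 * A 1 * A 0 * A 3 * A 1 * A 3 * A 3 * A 1 * A 3 = N * L 1 := by decide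
    have : pr (A 1 * A 0 * A 1 * A 0 * A 3 * A 1 * A 3 * A 3 * A 1 * A 3) = pr (L 1) := by
      rw [hW, pr_N_mul]
    rw [← this]
    simp only [_root_.map_mul]
    exact mul_mem (mul_mem (mul_mem (mul_mem (mul_mem (mul_mem (mul_mem (mul_mem (mul_mem
      (hA 1) (hA 0)) (hA 1)) (hA 0)) (hA 3)) (hA 1)) (hA 3)) (hA 3)) (hA 1)) (hA 3)
  exact mem_all hu hl g

end TetAux

/-- The tetrahedral group `T(5,5;2,2;2,3)` surjects onto the simple group
`PSL(2,19)`. -/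
theorem tet_5_5_2_surjects_onto_PSL219 :
    ∃ φ : PresentedGroup (tetRels 5 5 2) →* PSL2 19, Function.Surjective φ := by
  exact ⟨TetAux.phi, TetAux.phi_surjective⟩
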